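/- Let m > 0 and φ(r) = 1 + m/(2r). The function H(r) = (2/r)·(1 - m/(2r))/φ(r)³ is strictly increasing on the interval [m/2, m(2+√3)/2] and strictly decreasing on [m(2+√3)/2, ∞). In particular, H attains its maximum over [m/2, ∞) exactly at r = m(2+√3)/2. -/

import Mathlib

/-- For `m > 0`, the Schwarzschild mean curvature function
`H(r) = (2/r)(1 - m/(2r))/φ(r)^3`, `φ(r) = 1 + m/(2r)`, is strictly increasing on
`[m/2, m(2+√3)/2]`, strictly decreasing on `[m(2+√3)/2, ∞)`, and attains its maximum over
`[m/2, ∞)` exactly at the photonsphere radius `r = m(2+√3)/2`. -/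
theorem stmt_1 (m : ℝ) (hm : 0 < m)
    (φ : ℝ → ℝ) (hφ : ∀ r, φ r = 1 + m / (2 * r))
    (H : ℝ → ℝ) (hH : ∀ r, H r = (2 / r) * (1 - m / (2 * r)) / (φ r) ^ 3) :
    StrictMonoOn H (Set.Icc (m / 2) (m * (2 + Real.sqrt 3) / 2)) ∧
    StrictAntiOn H (Set.Ici (m * (2 + Real.sqrt 3) / 2)) ∧
    (∀ r ∈ Set.Ici (m / 2), r ≠ m * (2 + Real.sqrt 3) / 2 →
      H r < H (m * (2 + Real.sqrt 3) / 2)) := by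
  have s3 : Real.sqrt 3 ^ 2 = 3 := Real.sq_sqrt (by norm_num)
  have s3pos : 1 < Real.sqrt 3 := by nlinarith [Real.sqrt_nonneg 3]
  set c := m * (2 + Real.sqrt 3) / 2 with hc
  have hm2c : m / 2 < c := by rw [hc]; nlinarith
  have hH' : ∀ r, H r = 8 * r * (2 * r - m) / (2 * r + m) ^ 3 := by
    intro r
    rw [hH, hφ]
    rcases eq_or_ne r 0 with h | h
    · simp [h]
    rcases eq_or_ne (2 * r + m) 0 with h2 | h2
    · have hmr : m / (2 * r) = -1 := by
        have : m = -(2 * r) := by linarith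
        rw [this]
        field_simp
      rw [hmr, h2]
      norm_num
    · have hden : (1 : ℝ) + m / (2 * r) ≠ 0 := by
        intro h0
        apply h2
        field_simp at h0
        linarith
      field_simp
      ring
  have hder : ∀ x : ℝ, 0 < x →
      HasDerivAt H (8 * (-(4 * x ^ 2) + 8 * m * x - m ^ 2) / (2 * x + m) ^ 4) x := by
    intro x hx
    have hdpos : 0 < 2 * x + m := by linarith
    have hd : 2 * x + m ≠ 0 := ne_of_gt hdpos
    have hnum : HasDerivAt (fun r : ℝ => 8 * r * (2 * r - m)) (32 * x - 8 * m) x := by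
      have h1 : HasDerivAt (fun r : ℝ => 8 * r) 8 x := by
        simpa using (hasDerivAt_id x).const_mul (8 : ℝ)
      have h2 : HasDerivAt (fun r : ℝ => 2 * r - m) 2 x := by
        simpa using ((hasDerivAt_id x).const_mul (2 : ℝ)).sub_const m
      have := h1.fun_mul h2
      exact this.congr_deriv (by ring)
    have hden : HasDerivAt (fun r : ℝ => (2 * r + m) ^ 3) (3 * (2 * x + m) ^ 2 * 2) x := by
      have h2 : HasDerivAt (fun r : ℝ => 2 * r + m) 2 x := by
        simpa using ((hasDerivAt_id x).const_mul (2 : ℝ)).add_const m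
      simpa using (h2.fun_pow 3)
    have hq := hnum.div hden (pow_ne_zero 3 hd)
    have heq : ((32 * x - 8 * m) * (2 * x + m) ^ 3 -
        8 * x * (2 * x - m) * (3 * (2 * x + m) ^ 2 * 2)) / ((2 * x + m) ^ 3) ^ 2 =
        8 * (-(4 * x ^ 2) + 8 * m * x - m ^ 2) / (2 * x + m) ^ 4 := by
      field_simp
      ring
    rw [heq] at hq
    have hHe : H = fun r => 8 * r * (2 * r - m) / (2 * r + m) ^ 3 := funext hH'
    rw [hHe]
    exact hq
  have mono : StrictMonoOn H (Set.Icc (m / 2) c) := by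
    apply strictMonoOn_of_deriv_pos (convex_Icc _ _)
    · intro x hx
      have hx0 : 0 < x := lt_of_lt_of_le (by linarith) hx.1
      exact (hder x hx0).continuousAt.continuousWithinAt
    · intro x hx
      rw [interior_Icc] at hx
      have hx0 : 0 < x := lt_trans (by linarith) hx.1
      rw [(hder x hx0).deriv]
      have hb : x < c := hx.2
      have ha : m / 2 < x := hx.1
      apply div_pos
      · have hxb : x < m * (2 + Real.sqrt 3) / 2 := hb
        nlinarith [mul_pos (show (0:ℝ) < x - m * (2 - Real.sqrt 3) / 2 by nlinarith)
          (show (0:ℝ) < m * (2 + Real.sqrt 3) / 2 - x by linarith)]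
      · positivity
  have anti : StrictAntiOn H (Set.Ici c) := by
    apply strictAntiOn_of_deriv_neg (convex_Ici _)
    · intro x hx
      have hx0 : 0 < x := lt_of_lt_of_le (by linarith) hx
      exact (hder x hx0).continuousAt.continuousWithinAt
    · intro x hx
      rw [interior_Ici] at hx
      have hx0 : 0 < x := lt_trans (by linarith) hx
      rw [(hder x hx0).deriv]
      have hb : m * (2 + Real.sqrt 3) / 2 < x := hx
      apply div_neg_of_neg_of_pos
      · nlinarith [mul_pos (show (0:ℝ) < x - m * (2 - Real.sqrt 3) / 2 by nlinarith)
          (show (0:ℝ) < x - m * (2 + Real.sqrt 3) / 2 by linarith)]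
      · positivity
  refine ⟨mono, anti, ?_⟩
  intro r hr hne
  rcases lt_or_gt_of_ne hne with h | h
  · exact mono ⟨hr, le_of_lt h⟩ ⟨le_of_lt hm2c, le_refl c⟩ h
  · exact anti (le_refl c) (le_of_lt h) h
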